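/- A non-revisiting dual path in a pure (d−1)-dimensional simplicial complex on n vertices has length at most n − d. -/

import Mathlib

open Finset

/-- A non-revisiting dual path in a pure `(d−1)`-dimensional simplicial complex on `n`
vertices has length at most `n − d`: if `X 0, …, X N` are facets (`d`-subsets of `[n]`)
such that consecutive facets share exactly `d−1` vertices, and `X i ∩ X k ⊆ X j`
whenever `i ≤ j ≤ k` (non-revisiting), then `N ≤ n − d`. -/
theorem nonrevisiting_path_length_le (n d N : ℕ) (hd : 1 ≤ d)
    (X : Fin (N + 1) → Finset (Fin n))
    (hcard : ∀ i, (X i).card = d)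
    (hstep : ∀ i : Fin N, (X i.castSucc ∩ X i.succ).card = d - 1)
    (hnonrev : ∀ i j k : Fin (N + 1), i ≤ j → j ≤ k → X i ∩ X k ⊆ X j) :
    N ≤ n - d := by
  have hnew : ∀ i : Fin N, ∃ v, X i.succ \ X i.castSucc = {v} := by
    intro i
    rw [← Finset.card_eq_one]
    have h1 := Finset.card_sdiff_add_card_inter (X i.succ) (X i.castSucc)
    rw [Finset.inter_comm, hstep i, hcard] at h1
    omega
  choose f hf using hnew
  have hmem : ∀ i, f i ∈ X i.succ ∧ f i ∉ X i.castSucc := by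
    intro i
    have hv : f i ∈ X i.succ \ X i.castSucc := by
      rw [hf i]; exact Finset.mem_singleton_self _
    exact ⟨(Finset.mem_sdiff.mp hv).1, (Finset.mem_sdiff.mp hv).2⟩
  have key : ∀ i j : Fin N, i < j → f i ≠ f j := by
    intro i j hlt heq
    have h1 : i.succ ≤ j.castSucc := by
      simp only [Fin.le_def, Fin.lt_def, Fin.coe_castSucc, Fin.val_succ] at *
      omega
    have h2 : j.castSucc ≤ j.succ := (Fin.castSucc_lt_succ (i := j)).le
    have hin : f i ∈ X i.succ ∩ X j.succ :=
      Finset.mem_inter.mpr ⟨(hmem i).1, by rw [heq]; exact (hmem j).1⟩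
    have := hnonrev _ _ _ h1 h2 hin
    rw [heq] at this
    exact (hmem j).2 this
  have hinj : Function.Injective f := by
    intro i j heq
    by_contra hne
    rcases lt_or_gt_of_ne hne with h | h
    · exact key i j h heq
    · exact key j i h heq.symm
  have hnot0 : ∀ i : Fin N, f i ∉ X 0 := by
    intro i h0
    have h1 : (0 : Fin (N + 1)) ≤ i.castSucc := Fin.zero_le _
    have h2 : i.castSucc ≤ i.succ := (Fin.castSucc_lt_succ (i := i)).le
    exact (hmem i).2 (hnonrev _ _ _ h1 h2 (Finset.mem_inter.mpr ⟨h0, (hmem i).1⟩))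
  have hdisj : Disjoint (X 0) (Finset.image f Finset.univ) := by
    rw [Finset.disjoint_right]
    intro v hv
    obtain ⟨i, _, rfl⟩ := Finset.mem_image.mp hv
    exact hnot0 i
  have hcardu : (X 0 ∪ Finset.image f Finset.univ).card = d + N := by
    rw [Finset.card_union_of_disjoint hdisj, hcard,
      Finset.card_image_of_injective _ hinj, Finset.card_univ, Fintype.card_fin]
  have hle : (X 0 ∪ Finset.image f Finset.univ).card ≤ n := by
    have := Finset.card_le_univ (X 0 ∪ Finset.image f Finset.univ)
    simpa using this
  omega
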